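/- A submodular flow instance ((U,A), b̲, b̄, ρ) has a feasible flow if and only if κ(X) ≤ ρ(X) holds for all X ⊆ U. In such a case, if b̲, b̄ and ρ are all integer-valued (wherever finite), there exists an integral feasible flow. -/

import Mathlib

open Finset

/-- A submodular function with values in `ℝ ∪ {+∞}` (modeled as `EReal` values never `⊥`):
`ρ ∅ = 0` and the submodularity inequality. -/
def Submodular {U : Type*} [DecidableEq U] (ρ : Finset U → EReal) : Prop :=
  ρ ∅ = 0 ∧ ∀ X Y : Finset U, ρ (X ∩ Y) + ρ (X ∪ Y) ≤ ρ X + ρ Y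

/-- Membership in the base polyhedron `B(ρ)` of a submodular function `ρ`. -/
def InBase {U : Type*} [Fintype U] (ρ : Finset U → EReal) (x : U → ℝ) : Prop :=
  ((∑ i, x i : ℝ) : EReal) = ρ univ ∧
    ∀ X : Finset U, ((∑ i ∈ X, x i : ℝ) : EReal) ≤ ρ X

/-- Boundary of a flow `φ` on a directed graph given by `tail`/`head` maps
(parallel arcs allowed). -/
def SFBoundary {U A : Type*} [Fintype A] [DecidableEq U]
    (tail head : A → U) (φ : A → ℝ) (u : U) : ℝ :=
  ∑ a ∈ univ.filter (fun a => tail a = u), φ a -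
    ∑ a ∈ univ.filter (fun a => head a = u), φ a

/-- Feasibility of a flow for the submodular flow instance. -/
def SFFeasible {U A : Type*} [Fintype U] [Fintype A] [DecidableEq U]
    (tail head : A → U) (blow bup : A → EReal) (ρ : Finset U → EReal)
    (φ : A → ℝ) : Prop :=
  InBase ρ (SFBoundary tail head φ) ∧
    ∀ a, blow a ≤ ((φ a : ℝ) : EReal) ∧ ((φ a : ℝ) : EReal) ≤ bup a

/-- The cut function `κ` of the submodular flow instance. -/
noncomputable def SFCut {U A : Type*} [Fintype A] [DecidableEq U]
    (tail head : A → U) (blow bup : A → EReal) (X : Finset U) : EReal :=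
  (∑ a ∈ univ.filter (fun a => tail a ∈ X ∧ head a ∉ X), blow a) -
    (∑ a ∈ univ.filter (fun a => tail a ∉ X ∧ head a ∈ X), bup a)

private lemma ereal_cases (x : EReal) : x = ⊥ ∨ x = ⊤ ∨ ∃ r : ℝ, x = (r : EReal) := by
  induction x with
  | bot => exact Or.inl rfl
  | coe r => exact Or.inr (Or.inr ⟨r, rfl⟩)
  | top => exact Or.inr (Or.inl rfl)

private lemma ereal_sub_def (a b : EReal) : a - b = a + (-b) := rfl

private lemma ecoe_sum {ι : Type*} (s : Finset ι) (f : ι → ℝ) :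
    ((∑ i ∈ s, f i : ℝ) : EReal) = ∑ i ∈ s, ((f i : ℝ) : EReal) := by
  induction s using Finset.cons_induction with
  | empty => simp
  | cons a s ha ih => rw [Finset.sum_cons, Finset.sum_cons, ← ih]; exact EReal.coe_add _ _

private lemma ereal_add_ne_top {a b : EReal} (ha : a ≠ ⊤) (hb : b ≠ ⊤) : a + b ≠ ⊤ := by
  rcases ereal_cases a with rfl | rfl | ⟨p, rfl⟩ <;>
    rcases ereal_cases b with rfl | rfl | ⟨q, rfl⟩ <;> simp_all [← EReal.coe_add]

private lemma esum_ne_top {ι : Type*} {s : Finset ι} {f : ι → EReal}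
    (h : ∀ i ∈ s, f i ≠ ⊤) : ∑ i ∈ s, f i ≠ ⊤ := by
  induction s using Finset.cons_induction with
  | empty => simp
  | cons a s ha ih =>
      rw [Finset.sum_cons]
      exact ereal_add_ne_top (h a (Finset.mem_cons_self a s))
        (ih fun i hi => h i (Finset.mem_cons_of_mem hi))

private lemma esum_ne_bot {ι : Type*} {s : Finset ι} {f : ι → EReal}
    (h : ∀ i ∈ s, f i ≠ ⊥) : ∑ i ∈ s, f i ≠ ⊥ := by
  induction s using Finset.cons_induction with
  | empty => simp
  | cons a s ha ih =>
      rw [Finset.sum_cons]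
      refine fun hc => ?_
      rcases EReal.add_eq_bot_iff.1 hc with hc | hc
      · exact h a (Finset.mem_cons_self a s) hc
      · exact ih (fun i hi => h i (Finset.mem_cons_of_mem hi)) hc

private lemma sum_split_at {A : Type*} [Fintype A] [DecidableEq A] {M : Type*} [AddCommMonoid M]
    (a₀ : A) (f : A → M) :
    ∑ a, f a = f a₀ + ∑ a' : {a : A // a ≠ a₀}, f a'.1 := by
  have h : ∑ a' : {a : A // a ≠ a₀}, f a'.1 = ∑ a ∈ Finset.univ.erase a₀, f a := by
    rw [← Finset.subtype_univ (fun a => a ≠ a₀), Finset.sum_subtype_eq_sum_filter,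
      Finset.filter_ne']
  rw [h, Finset.add_sum_erase Finset.univ f (Finset.mem_univ a₀)]

private lemma sum_filter_split {A : Type*} [Fintype A] [DecidableEq A] {M : Type*}
    [AddCommMonoid M] (a₀ : A) (p : A → Prop) [DecidablePred p] (f : A → M) :
    ∑ a ∈ univ.filter p, f a
      = (∑ a' ∈ univ.filter (fun a' : {a : A // a ≠ a₀} => p a'.1), f a'.1)
        + (if p a₀ then f a₀ else 0) := by
  simp only [Finset.sum_filter]
  rw [sum_split_at a₀ (fun a => if p a then f a else 0)]
  exact add_comm _ _

private lemma sum_sum_eq {U A : Type*} [Fintype A] [DecidableEq U] (g : A → U) (φ : A → ℝ)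
    (X : Finset U) :
    ∑ u ∈ X, ∑ a ∈ univ.filter (fun a => g a = u), φ a
      = ∑ a ∈ univ.filter (fun a => g a ∈ X), φ a := by
  simp only [Finset.sum_filter]
  rw [Finset.sum_comm]
  refine Finset.sum_congr rfl fun a _ => ?_
  exact Finset.sum_ite_eq X (g a) (fun _ => φ a)

private lemma boundary_sum {U A : Type*} [Fintype A] [DecidableEq U]
    (tail head : A → U) (φ : A → ℝ) (X : Finset U) :
    ∑ u ∈ X, SFBoundary tail head φ u
      = (∑ a ∈ univ.filter (fun a => tail a ∈ X), φ a)
        - (∑ a ∈ univ.filter (fun a => head a ∈ X), φ a) := by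
  unfold SFBoundary
  rw [Finset.sum_sub_distrib, sum_sum_eq, sum_sum_eq]

private lemma inout_split {U A : Type*} [Fintype A] [DecidableEq U]
    (tail head : A → U) (φ : A → ℝ) (X : Finset U) :
    (∑ a ∈ univ.filter (fun a => tail a ∈ X), φ a)
        - (∑ a ∈ univ.filter (fun a => head a ∈ X), φ a)
      = (∑ a ∈ univ.filter (fun a => tail a ∈ X ∧ head a ∉ X), φ a)
        - (∑ a ∈ univ.filter (fun a => tail a ∉ X ∧ head a ∈ X), φ a) := by
  simp only [Finset.sum_filter, ← Finset.sum_sub_distrib]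
  refine Finset.sum_congr rfl fun a _ => ?_
  by_cases h1 : tail a ∈ X <;> by_cases h2 : head a ∈ X <;> simp [h1, h2]

private lemma sf_feasible_cut {U A : Type*} [Fintype U] [Fintype A] [DecidableEq U]
    (tail head : A → U) (blow bup : A → EReal) (ρ : Finset U → EReal) (φ : A → ℝ)
    (hφ : SFFeasible tail head blow bup ρ φ) (X : Finset U) :
    SFCut tail head blow bup X ≤ ρ X := by
  obtain ⟨⟨_, hb2⟩, hcapφ⟩ := hφ
  have h1 : (∑ a ∈ univ.filter (fun a => tail a ∈ X ∧ head a ∉ X), blow a)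
      ≤ ((∑ a ∈ univ.filter (fun a => tail a ∈ X ∧ head a ∉ X), φ a : ℝ) : EReal) := by
    rw [ecoe_sum]; exact Finset.sum_le_sum fun a _ => (hcapφ a).1
  have h2 : ((∑ a ∈ univ.filter (fun a => tail a ∉ X ∧ head a ∈ X), φ a : ℝ) : EReal)
      ≤ ∑ a ∈ univ.filter (fun a => tail a ∉ X ∧ head a ∈ X), bup a := by
    rw [ecoe_sum]; exact Finset.sum_le_sum fun a _ => (hcapφ a).2
  refine le_trans (EReal.sub_le_sub h1 h2) (le_trans (le_of_eq ?_) (hb2 X))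
  rw [← EReal.coe_sub, boundary_sum, inout_split]

universe u v

private lemma ereal_add_sub_add_le {r1 r2 r3 r4 m1 m2 m3 m4 : EReal}
    (h1 : r1 + r2 ≤ r3 + r4) (h2 : m1 + m2 ≤ m3 + m4) :
    (r1 + m1) + (r2 + m2) ≤ (r3 + m3) + (r4 + m4) := by
  calc (r1 + m1) + (r2 + m2) = (r1 + r2) + (m1 + m2) := add_add_add_comm r1 m1 r2 m2
    _ ≤ (r3 + r4) + (m3 + m4) := add_le_add h1 h2
    _ = (r3 + m3) + (r4 + m4) := (add_add_add_comm r3 m3 r4 m4).symm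

private lemma ereal_shape (a b c : EReal) : a + b - c = a + (b - c) := add_assoc a b (-c)

private lemma sf_main {U : Type u} [Fintype U] [DecidableEq U] (S : AddSubgroup ℝ) :
    ∀ (n : ℕ) {A : Type v} [Fintype A] (tail head : A → U) (blow bup : A → EReal)
      (ρ : Finset U → EReal),
      Fintype.card A = n →
      Submodular ρ → (∀ X, ρ X ≠ ⊥) → ρ univ = 0 →
      (∀ a, blow a ≠ ⊤) → (∀ a, bup a ≠ ⊥) → (∀ a, blow a ≤ bup a) →
      (∀ X : Finset U, SFCut tail head blow bup X ≤ ρ X) →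
      (∀ a, blow a = ⊥ ∨ ∃ r : ℝ, r ∈ S ∧ blow a = (r : EReal)) →
      (∀ a, bup a = ⊤ ∨ ∃ r : ℝ, r ∈ S ∧ bup a = (r : EReal)) →
      (∀ X, ρ X = ⊤ ∨ ∃ r : ℝ, r ∈ S ∧ ρ X = (r : EReal)) →
      ∃ φ : A → ℝ, SFFeasible tail head blow bup ρ φ ∧ ∀ a, φ a ∈ S := by
  intro n
  induction n with
  | zero =>
    intro A _ tail head blow bup ρ hA hsub hbot huniv hbt hub hcap hcut hbS huS hρS
    have hE : IsEmpty A := Fintype.card_eq_zero_iff.mp hA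
    have hb0 : SFBoundary tail head (fun _ => (0:ℝ)) = fun _ => 0 := by
      funext u; simp [SFBoundary]
    refine ⟨fun _ => 0, ⟨⟨?_, ?_⟩, fun a => (hE.false a).elim⟩, fun a => (hE.false a).elim⟩
    · rw [hb0]; simpa using huniv.symm
    · intro X
      have h0 : SFCut tail head blow bup X = 0 := by
        unfold SFCut; rw [Finset.univ_eq_empty]; simp
      rw [hb0]
      simpa using h0 ▸ hcut X
  | succ n ih =>
    intro A _ tail head blow bup ρ hA hsub hbot huniv hbt hub hcap hcut hbS huS hρS
    classical
    have hpos : 0 < Fintype.card A := by omega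
    obtain ⟨a₀⟩ := Fintype.card_pos_iff.mp hpos
    have hcard : Fintype.card {a : A // a ≠ a₀} = n := by
      have h2 := Fintype.card_subtype_compl (fun a : A => a = a₀)
      rw [hA, Fintype.card_subtype_eq a₀] at h2
      simpa using h2
    -- the modified submodular function
    have hkey : (0:EReal) ≤ bup a₀ - blow a₀ := by
      rcases ereal_cases (blow a₀) with hb | hb | ⟨c, hb⟩
      · rw [hb, EReal.sub_bot (hub a₀)]; exact le_top
      · exact absurd hb (hbt a₀)
      · calc (0:EReal) = ((c - c : ℝ) : EReal) := by norm_num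
          _ = (c:EReal) - (c:EReal) := EReal.coe_sub c c
          _ ≤ bup a₀ - blow a₀ := by rw [hb]; exact EReal.sub_le_sub (hb ▸ hcap a₀) (le_refl _)
    have hsub2 : Submodular (fun X : Finset U =>
        ρ X + (if tail a₀ ∉ X ∧ head a₀ ∈ X then bup a₀ else 0)
          - (if tail a₀ ∈ X ∧ head a₀ ∉ X then blow a₀ else 0)) := by
      constructor
      · simp [hsub.1]
      · intro X Y
        simp only [ereal_shape]
        refine ereal_add_sub_add_le (hsub.2 X Y) ?_
        by_cases h1 : tail a₀ ∈ X <;> by_cases h2 : head a₀ ∈ X <;>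
          by_cases h3 : tail a₀ ∈ Y <;> by_cases h4 : head a₀ ∈ Y <;>
          simp only [Finset.mem_inter, Finset.mem_union, h1, h2, h3, h4, true_and, and_true,
            false_and, and_false, not_true_eq_false, not_false_eq_true, true_or, or_true,
            false_or, or_false, if_true, if_false, ite_true, ite_false, sub_zero, sub_self,
            zero_sub, add_zero, zero_add, le_refl] <;>
          first
            | rfl
            | (exact le_of_eq (add_comm _ _))
            | simpa [ereal_sub_def] using hkey
            | (rw [add_comm]; simpa [ereal_sub_def] using hkey)
    have hbot2 : ∀ X : Finset U,
        ρ X + (if tail a₀ ∉ X ∧ head a₀ ∈ X then bup a₀ else 0)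
          - (if tail a₀ ∈ X ∧ head a₀ ∉ X then blow a₀ else 0) ≠ ⊥ := by
      intro X hc
      rw [ereal_sub_def] at hc
      rcases EReal.add_eq_bot_iff.1 hc with hc | hc
      · rcases EReal.add_eq_bot_iff.1 hc with hc | hc
        · exact hbot X hc
        · split_ifs at hc with h
          · exact hub a₀ hc
          · simp at hc
      · rw [EReal.neg_eq_bot_iff] at hc
        split_ifs at hc with h
        · exact hbt a₀ hc
        · simp at hc
    have huniv2 : ρ univ + (if tail a₀ ∉ (univ : Finset U) ∧ head a₀ ∈ (univ : Finset U)
          then bup a₀ else 0)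
        - (if tail a₀ ∈ (univ : Finset U) ∧ head a₀ ∉ (univ : Finset U) then blow a₀ else 0)
        = 0 := by
      simp [huniv]
    have hcut2 : ∀ X : Finset U,
        SFCut (fun a' : {a : A // a ≠ a₀} => tail a'.1) (fun a' => head a'.1)
          (fun a' => blow a'.1) (fun a' => bup a'.1) X
        ≤ ρ X + (if tail a₀ ∉ X ∧ head a₀ ∈ X then bup a₀ else 0)
            - (if tail a₀ ∈ X ∧ head a₀ ∉ X then blow a₀ else 0) := by
      intro X
      have hs := hcut X
      unfold SFCut at hs ⊢
      rw [sum_filter_split a₀ (fun a => tail a ∈ X ∧ head a ∉ X) blow,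
        sum_filter_split a₀ (fun a => tail a ∉ X ∧ head a ∈ X) bup] at hs
      beta_reduce
      set Sb := ∑ a' ∈ univ.filter
          (fun a' : {a : A // a ≠ a₀} => tail a'.1 ∈ X ∧ head a'.1 ∉ X), blow a'.1 with hSbdef
      set Su := ∑ a' ∈ univ.filter
          (fun a' : {a : A // a ≠ a₀} => tail a'.1 ∉ X ∧ head a'.1 ∈ X), bup a'.1 with hSudef
      have hSbt : Sb ≠ ⊤ := esum_ne_top (fun a _ => hbt a.1)
      have hSub : Su ≠ ⊥ := esum_ne_bot (fun a _ => hub a.1)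
      by_cases h2 : tail a₀ ∈ X ∧ head a₀ ∉ X
      · have h1 : ¬(tail a₀ ∉ X ∧ head a₀ ∈ X) := fun h => h.1 h2.1
        rw [if_pos h2, if_neg h1, add_zero] at hs
        rw [if_pos h2, if_neg h1, add_zero]
        rcases ereal_cases (blow a₀) with hb | hb | ⟨c, hb⟩
        · rw [hb, EReal.sub_bot (hbot X)]; exact le_top
        · exact absurd hb (hbt a₀)
        · rw [hb] at hs ⊢
          rcases ereal_cases Sb with hsb | hsb | ⟨p, hsb⟩
          · rw [hsb, EReal.bot_sub]; exact bot_le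
          · exact absurd hsb hSbt
          · rcases ereal_cases Su with hsu | hsu | ⟨q, hsu⟩
            · exact absurd hsu hSub
            · rw [hsu, EReal.sub_top]; exact bot_le
            · rw [hsb, hsu] at hs ⊢
              rcases ereal_cases (ρ X) with hρx | hρx | ⟨r, hρx⟩
              · exact absurd hρx (hbot X)
              · rw [hρx, EReal.top_sub_coe]; exact le_top
              · rw [hρx] at hs ⊢
                rw [← EReal.coe_add, ← EReal.coe_sub, EReal.coe_le_coe_iff] at hs
                rw [← EReal.coe_sub, ← EReal.coe_sub, EReal.coe_le_coe_iff]
                linarith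
      · by_cases h1 : tail a₀ ∉ X ∧ head a₀ ∈ X
        · rw [if_pos h1, if_neg h2, add_zero] at hs
          rw [if_pos h1, if_neg h2, sub_zero]
          rcases ereal_cases (bup a₀) with hb | hb | ⟨c, hb⟩
          · exact absurd hb (hub a₀)
          · rw [hb, EReal.add_top_of_ne_bot (hbot X)]; exact le_top
          · rw [hb] at hs ⊢
            rcases ereal_cases Sb with hsb | hsb | ⟨p, hsb⟩
            · rw [hsb, EReal.bot_sub]; exact bot_le
            · exact absurd hsb hSbt
            · rcases ereal_cases Su with hsu | hsu | ⟨q, hsu⟩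
              · exact absurd hsu hSub
              · rw [hsu, EReal.sub_top]; exact bot_le
              · rw [hsb, hsu] at hs ⊢
                rcases ereal_cases (ρ X) with hρx | hρx | ⟨r, hρx⟩
                · exact absurd hρx (hbot X)
                · rw [hρx, EReal.top_add_coe]; exact le_top
                · rw [hρx] at hs ⊢
                  rw [← EReal.coe_add, ← EReal.coe_sub, EReal.coe_le_coe_iff] at hs
                  rw [← EReal.coe_sub, ← EReal.coe_add, EReal.coe_le_coe_iff]
                  linarith
        · rw [if_neg h1, if_neg h2, add_zero, add_zero] at hs
          rw [if_neg h1, if_neg h2, add_zero, sub_zero]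
          exact hs
    have hρS2 : ∀ X : Finset U,
        (ρ X + (if tail a₀ ∉ X ∧ head a₀ ∈ X then bup a₀ else 0)
          - (if tail a₀ ∈ X ∧ head a₀ ∉ X then blow a₀ else 0) = ⊤)
        ∨ ∃ r : ℝ, r ∈ S ∧ ρ X + (if tail a₀ ∉ X ∧ head a₀ ∈ X then bup a₀ else 0)
          - (if tail a₀ ∈ X ∧ head a₀ ∉ X then blow a₀ else 0) = (r : EReal) := by
      intro X
      by_cases h2 : tail a₀ ∈ X ∧ head a₀ ∉ X
      · have h1 : ¬(tail a₀ ∉ X ∧ head a₀ ∈ X) := fun h => h.1 h2.1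
        rw [if_pos h2, if_neg h1, add_zero]
        rcases hbS a₀ with hb | ⟨c, hcS, hb⟩
        · left; rw [hb, EReal.sub_bot (hbot X)]
        · rcases hρS X with hx | ⟨r, hrS, hx⟩
          · left; rw [hx, hb, EReal.top_sub_coe]
          · right; exact ⟨r - c, sub_mem hrS hcS, by rw [hx, hb, ← EReal.coe_sub]⟩
      · by_cases h1 : tail a₀ ∉ X ∧ head a₀ ∈ X
        · rw [if_pos h1, if_neg h2, sub_zero]
          rcases huS a₀ with hb | ⟨c, hcS, hb⟩
          · left; rw [hb]; exact EReal.add_top_of_ne_bot (hbot X)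
          · rcases hρS X with hx | ⟨r, hrS, hx⟩
            · left; rw [hx, hb]; exact EReal.top_add_coe c
            · right; exact ⟨r + c, add_mem hrS hcS, by rw [hx, hb, ← EReal.coe_add]⟩
        · rw [if_neg h1, if_neg h2, add_zero, sub_zero]; exact hρS X
    obtain ⟨φ', hφ'feas, hφ'S⟩ := ih (fun a' : {a : A // a ≠ a₀} => tail a'.1)
      (fun a' => head a'.1) (fun a' => blow a'.1) (fun a' => bup a'.1)
      (fun X => ρ X + (if tail a₀ ∉ X ∧ head a₀ ∈ X then bup a₀ else 0)
        - (if tail a₀ ∈ X ∧ head a₀ ∉ X then blow a₀ else 0))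
      hcard hsub2 hbot2 (by simpa using huniv2) (fun a' => hbt a'.1) (fun a' => hub a'.1)
      (fun a' => hcap a'.1) hcut2 (fun a' => hbS a'.1) (fun a' => huS a'.1) hρS2
    obtain ⟨⟨hB1, hB2⟩, hcap'⟩ := hφ'feas
    set x : U → ℝ := SFBoundary (fun a' : {a : A // a ≠ a₀} => tail a'.1)
      (fun a' => head a'.1) φ' with hxdef
    beta_reduce at hB1 hB2
    have hxuniv : ∑ i, x i = 0 := by
      have h0 : ((∑ i, x i : ℝ) : EReal) = 0 := hB1.trans huniv2
      exact_mod_cast h0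
    have hB2' : ∀ X : Finset U, ((∑ u ∈ X, x u : ℝ) : EReal)
        ≤ ρ X + (if tail a₀ ∉ X ∧ head a₀ ∈ X then bup a₀ else 0)
          - (if tail a₀ ∈ X ∧ head a₀ ∉ X then blow a₀ else 0) := hB2
    have hxS : ∀ u, x u ∈ S := by
      intro u
      rw [hxdef]
      unfold SFBoundary
      exact sub_mem (sum_mem fun a _ => hφ'S a) (sum_mem fun a _ => hφ'S a)
    have hxsumS : ∀ X : Finset U, (∑ u ∈ X, x u) ∈ S := fun X => sum_mem fun u _ => hxS u
    have hxle : ∀ X : Finset U, ¬(tail a₀ ∉ X ∧ head a₀ ∈ X) → ¬(tail a₀ ∈ X ∧ head a₀ ∉ X) →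
        ((∑ u ∈ X, x u : ℝ) : EReal) ≤ ρ X := by
      intro X hP1 hP2
      have := hB2' X
      rwa [if_neg hP1, if_neg hP2, add_zero, sub_zero] at this
    set lows : Finset ℝ := (((univ : Finset (Finset U)).filter
        (fun X => head a₀ ∈ X ∧ tail a₀ ∉ X ∧ ρ X ≠ ⊤)).image
        (fun X => (∑ u ∈ X, x u) - (ρ X).toReal))
      ∪ (if blow a₀ = ⊥ then ∅ else {(blow a₀).toReal}) with hlowsdef
    set ups : Finset ℝ := (((univ : Finset (Finset U)).filter
        (fun X => tail a₀ ∈ X ∧ head a₀ ∉ X ∧ ρ X ≠ ⊤)).image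
        (fun X => (ρ X).toReal - (∑ u ∈ X, x u)))
      ∪ (if bup a₀ = ⊤ then ∅ else {(bup a₀).toReal}) with hupsdef
    have hlowS : ∀ l ∈ lows, l ∈ S := by
      intro l hl
      rw [hlowsdef] at hl
      rcases Finset.mem_union.1 hl with hl | hl
      · obtain ⟨X, hX, rfl⟩ := Finset.mem_image.1 hl
        obtain ⟨-, hXc⟩ := Finset.mem_filter.1 hX
        refine sub_mem (hxsumS X) ?_
        rcases hρS X with h | ⟨r, hrS, hr⟩
        · exact absurd h hXc.2.2
        · rw [hr, EReal.toReal_coe]; exact hrS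
      · split_ifs at hl with hb
        · simp at hl
        · rw [Finset.mem_singleton] at hl
          subst hl
          rcases hbS a₀ with h | ⟨r, hrS, hr⟩
          · exact absurd h hb
          · rw [hr, EReal.toReal_coe]; exact hrS
    have hupS : ∀ r ∈ ups, r ∈ S := by
      intro l hl
      rw [hupsdef] at hl
      rcases Finset.mem_union.1 hl with hl | hl
      · obtain ⟨X, hX, rfl⟩ := Finset.mem_image.1 hl
        obtain ⟨-, hXc⟩ := Finset.mem_filter.1 hX
        refine sub_mem ?_ (hxsumS X)
        rcases hρS X with h | ⟨r, hrS, hr⟩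
        · exact absurd h hXc.2.2
        · rw [hr, EReal.toReal_coe]; exact hrS
      · split_ifs at hl with hb
        · simp at hl
        · rw [Finset.mem_singleton] at hl
          subst hl
          rcases huS a₀ with h | ⟨r, hrS, hr⟩
          · exact absurd h hb
          · rw [hr, EReal.toReal_coe]; exact hrS
    have hpair : ∀ l ∈ lows, ∀ r ∈ ups, l ≤ r := by
      intro l hl r hr
      rw [hlowsdef] at hl
      rw [hupsdef] at hr
      rcases Finset.mem_union.1 hl with hl | hl
      · obtain ⟨X, hX, rfl⟩ := Finset.mem_image.1 hl
        obtain ⟨-, hjX, hiX, hρX⟩ := Finset.mem_filter.1 hX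
        rcases Finset.mem_union.1 hr with hr | hr
        · obtain ⟨Y, hY, rfl⟩ := Finset.mem_image.1 hr
          obtain ⟨-, hiY, hjY, hρY⟩ := Finset.mem_filter.1 hY
          have hcap1 : ((∑ u ∈ X ∩ Y, x u : ℝ) : EReal) ≤ ρ (X ∩ Y) :=
            hxle (X ∩ Y) (fun h => hjY (Finset.mem_inter.1 h.2).2)
              (fun h => hiX (Finset.mem_inter.1 h.1).1)
          have hcap2 : ((∑ u ∈ X ∪ Y, x u : ℝ) : EReal) ≤ ρ (X ∪ Y) :=
            hxle (X ∪ Y) (fun h => h.1 (Finset.mem_union_right X hiY))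
              (fun h => h.2 (Finset.mem_union_left Y hjX))
          have hsumle := le_trans (add_le_add hcap1 hcap2) (hsub.2 X Y)
          rw [← EReal.coe_add, ← EReal.coe_toReal hρX (hbot X),
            ← EReal.coe_toReal hρY (hbot Y), ← EReal.coe_add, EReal.coe_le_coe_iff] at hsumle
          have hiu : (∑ u ∈ X ∪ Y, x u) + (∑ u ∈ X ∩ Y, x u)
              = (∑ u ∈ X, x u) + (∑ u ∈ Y, x u) := Finset.sum_union_inter
          linarith
        · split_ifs at hr with hbt'
          · simp at hr
          · rw [Finset.mem_singleton] at hr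
            subst hr
            have := hB2' X
            rw [if_pos ⟨hiX, hjX⟩, if_neg (fun h => h.2 hjX), sub_zero,
              ← EReal.coe_toReal hρX (hbot X), ← EReal.coe_toReal hbt' (hub a₀),
              ← EReal.coe_add, EReal.coe_le_coe_iff] at this
            linarith
      · split_ifs at hl with hbb
        · simp at hl
        · rw [Finset.mem_singleton] at hl
          subst hl
          rcases Finset.mem_union.1 hr with hr | hr
          · obtain ⟨Y, hY, rfl⟩ := Finset.mem_image.1 hr
            obtain ⟨-, hiY, hjY, hρY⟩ := Finset.mem_filter.1 hY
            have := hB2' Y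
            rw [if_neg (fun h => h.1 hiY), if_pos ⟨hiY, hjY⟩, add_zero,
              ← EReal.coe_toReal hρY (hbot Y), ← EReal.coe_toReal (hbt a₀) hbb,
              ← EReal.coe_sub, EReal.coe_le_coe_iff] at this
            linarith
          · split_ifs at hr with hbt'
            · simp at hr
            · rw [Finset.mem_singleton] at hr
              subst hr
              exact EReal.toReal_le_toReal (hcap a₀) hbb hbt'
    obtain ⟨t, htS, hlt, htu⟩ : ∃ t : ℝ, t ∈ S ∧ (∀ l ∈ lows, l ≤ t) ∧ (∀ r ∈ ups, t ≤ r) := by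
      by_cases hL : lows.Nonempty
      · exact ⟨lows.max' hL, hlowS _ (lows.max'_mem hL), fun l hl => Finset.le_max' _ _ hl,
          fun r hr => hpair _ (lows.max'_mem hL) r hr⟩
      · by_cases hU : ups.Nonempty
        · exact ⟨ups.min' hU, hupS _ (ups.min'_mem hU),
            fun l hl => absurd ⟨l, hl⟩ hL, fun r hr => Finset.min'_le _ _ hr⟩
        · exact ⟨0, S.zero_mem, fun l hl => absurd ⟨l, hl⟩ hL, fun r hr => absurd ⟨r, hr⟩ hU⟩
    have htlow : blow a₀ ≤ (t : EReal) := by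
      rcases ereal_cases (blow a₀) with hb | hb | ⟨c, hb⟩
      · rw [hb]; exact bot_le
      · exact absurd hb (hbt a₀)
      · rw [hb]
        refine EReal.coe_le_coe_iff.2 (hlt c ?_)
        rw [hlowsdef]
        refine Finset.mem_union_right _ ?_
        rw [if_neg (by rw [hb]; simp)]
        rw [hb, EReal.toReal_coe]
        exact Finset.mem_singleton_self c
    have htup : (t : EReal) ≤ bup a₀ := by
      rcases ereal_cases (bup a₀) with hb | hb | ⟨c, hb⟩
      · exact absurd hb (hub a₀)
      · rw [hb]; exact le_top
      · rw [hb]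
        refine EReal.coe_le_coe_iff.2 (htu c ?_)
        rw [hupsdef]
        refine Finset.mem_union_right _ ?_
        rw [if_neg (by rw [hb]; simp)]
        rw [hb, EReal.toReal_coe]
        exact Finset.mem_singleton_self c
    have hup_bound : ∀ X : Finset U, tail a₀ ∈ X → head a₀ ∉ X →
        (((∑ u ∈ X, x u) + t : ℝ) : EReal) ≤ ρ X := by
      intro X hiX hjX
      rcases ereal_cases (ρ X) with h | h | ⟨r, h⟩
      · exact absurd h (hbot X)
      · rw [h]; exact le_top
      · rw [h]
        refine EReal.coe_le_coe_iff.2 ?_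
        have hmem : (ρ X).toReal - (∑ u ∈ X, x u) ∈ ups := by
          rw [hupsdef]
          refine Finset.mem_union_left _ (Finset.mem_image.2 ⟨X, Finset.mem_filter.2
            ⟨Finset.mem_univ X, hiX, hjX, by rw [h]; simp⟩, rfl⟩)
        have h2 := htu _ hmem
        rw [h, EReal.toReal_coe] at h2
        linarith
    have hlow_bound : ∀ X : Finset U, head a₀ ∈ X → tail a₀ ∉ X →
        (((∑ u ∈ X, x u) - t : ℝ) : EReal) ≤ ρ X := by
      intro X hjX hiX
      rcases ereal_cases (ρ X) with h | h | ⟨r, h⟩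
      · exact absurd h (hbot X)
      · rw [h]; exact le_top
      · rw [h]
        refine EReal.coe_le_coe_iff.2 ?_
        have hmem : (∑ u ∈ X, x u) - (ρ X).toReal ∈ lows := by
          rw [hlowsdef]
          refine Finset.mem_union_left _ (Finset.mem_image.2 ⟨X, Finset.mem_filter.2
            ⟨Finset.mem_univ X, hjX, hiX, by rw [h]; simp⟩, rfl⟩)
        have h2 := hlt _ hmem
        rw [h, EReal.toReal_coe] at h2
        linarith
    have hbd : ∀ X : Finset U,
        ∑ u ∈ X, SFBoundary tail head (fun a => if h : a = a₀ then t else φ' ⟨a, h⟩) u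
          = (∑ u ∈ X, x u)
            + ((if tail a₀ ∈ X then t else 0) - (if head a₀ ∈ X then t else 0)) := by
      intro X
      rw [boundary_sum tail head _ X,
        sum_filter_split a₀ (fun a => tail a ∈ X) (fun a => if h : a = a₀ then t else φ' ⟨a, h⟩),
        sum_filter_split a₀ (fun a => head a ∈ X) (fun a => if h : a = a₀ then t else φ' ⟨a, h⟩)]
      have e1 : ∀ (p : {a : A // a ≠ a₀} → Prop) (inst : DecidablePred p),
          ∑ a' ∈ univ.filter p, (fun a => if h : a = a₀ then t else φ' ⟨a, h⟩) a'.1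
            = ∑ a' ∈ univ.filter p, φ' a' :=
        fun p inst => Finset.sum_congr rfl fun a' _ => dif_neg a'.2
      rw [e1, e1, dif_pos rfl]
      have e3 : ∑ u ∈ X, x u
          = (∑ a' ∈ univ.filter (fun a' : {a : A // a ≠ a₀} => tail a'.1 ∈ X), φ' a')
            - ∑ a' ∈ univ.filter (fun a' : {a : A // a ≠ a₀} => head a'.1 ∈ X), φ' a' := by
        rw [hxdef, boundary_sum]
      rw [e3]
      ring
    refine ⟨fun a => if h : a = a₀ then t else φ' ⟨a, h⟩, ⟨⟨?_, ?_⟩, ?_⟩, ?_⟩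
    · rw [hbd univ]
      rw [if_pos (Finset.mem_univ _), if_pos (Finset.mem_univ _), sub_self, add_zero, hxuniv,
        huniv]
      exact EReal.coe_zero
    · intro X
      rw [hbd X]
      by_cases hiX : tail a₀ ∈ X <;> by_cases hjX : head a₀ ∈ X
      · rw [if_pos hiX, if_pos hjX, sub_self, add_zero]
        exact hxle X (fun h => h.1 hiX) (fun h => h.2 hjX)
      · rw [if_pos hiX, if_neg hjX, sub_zero]
        exact hup_bound X hiX hjX
      · rw [if_neg hiX, if_pos hjX, zero_sub, ← sub_eq_add_neg]
        exact hlow_bound X hjX hiX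
      · rw [if_neg hiX, if_neg hjX, sub_self, add_zero]
        exact hxle X (fun h => hjX h.2) (fun h => hiX h.1)
    · intro a
      by_cases ha : a = a₀
      · subst ha
        beta_reduce
        rw [dif_pos rfl]
        exact ⟨htlow, htup⟩
      · have h := hcap' ⟨a, ha⟩
        beta_reduce
        rw [dif_neg ha]
        exact h
    · intro a
      by_cases ha : a = a₀
      · subst ha; beta_reduce; rw [dif_pos rfl]; exact htS
      · beta_reduce; rw [dif_neg ha]; exact hφ'S ⟨a, ha⟩

/-- **Frank's feasibility theorem for submodular flows.**
A submodular flow instance has a feasible flow iff `κ(X) ≤ ρ(X)` for all `X ⊆ U`;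
moreover, if the data are integer-valued (wherever finite), then in the feasible case
there is an integral feasible flow. -/
theorem submodular_flow_feasibility
    {U A : Type*} [Fintype U] [Fintype A] [DecidableEq U]
    (tail head : A → U) (blow bup : A → EReal) (ρ : Finset U → EReal)
    (hρsub : Submodular ρ) (hρbot : ∀ X, ρ X ≠ ⊥) (hρuniv : ρ univ = 0)
    (hblow : ∀ a, blow a ≠ ⊤) (hbup : ∀ a, bup a ≠ ⊥)
    (hcap : ∀ a, blow a ≤ bup a) :
    ((∃ φ : A → ℝ, SFFeasible tail head blow bup ρ φ) ↔
      ∀ X : Finset U, SFCut tail head blow bup X ≤ ρ X) ∧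
    ((∀ a, blow a = ⊥ ∨ ∃ z : ℤ, blow a = ((z : ℝ) : EReal)) →
     (∀ a, bup a = ⊤ ∨ ∃ z : ℤ, bup a = ((z : ℝ) : EReal)) →
     (∀ X, ρ X = ⊤ ∨ ∃ z : ℤ, ρ X = ((z : ℝ) : EReal)) →
     (∃ φ : A → ℝ, SFFeasible tail head blow bup ρ φ) →
     ∃ φ : A → ℝ, SFFeasible tail head blow bup ρ φ ∧ ∀ a, ∃ z : ℤ, φ a = (z : ℝ)) := by
  constructor
  · constructor
    · rintro ⟨φ, hφ⟩ X
      exact sf_feasible_cut tail head blow bup ρ φ hφ X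
    · intro hcut
      obtain ⟨φ, hφ, -⟩ := sf_main (⊤ : AddSubgroup ℝ) (Fintype.card A) tail head blow bup ρ
        rfl hρsub hρbot hρuniv hblow hbup hcap hcut
        (fun a => by
          rcases ereal_cases (blow a) with h | h | ⟨r, h⟩
          · exact Or.inl h
          · exact absurd h (hblow a)
          · exact Or.inr ⟨r, AddSubgroup.mem_top r, h⟩)
        (fun a => by
          rcases ereal_cases (bup a) with h | h | ⟨r, h⟩
          · exact absurd h (hbup a)
          · exact Or.inl h
          · exact Or.inr ⟨r, AddSubgroup.mem_top r, h⟩)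
        (fun X => by
          rcases ereal_cases (ρ X) with h | h | ⟨r, h⟩
          · exact absurd h (hρbot X)
          · exact Or.inl h
          · exact Or.inr ⟨r, AddSubgroup.mem_top r, h⟩)
      exact ⟨φ, hφ⟩
  · intro hbZ huZ hρZ hfeas
    obtain ⟨φ₀, hφ₀⟩ := hfeas
    have hcut : ∀ X : Finset U, SFCut tail head blow bup X ≤ ρ X :=
      fun X => sf_feasible_cut tail head blow bup ρ φ₀ hφ₀ X
    obtain ⟨φ, hφ, hS⟩ := sf_main ((Int.castAddHom ℝ).range) (Fintype.card A) tail head blow bup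
      ρ rfl hρsub hρbot hρuniv hblow hbup hcap hcut
      (fun a => (hbZ a).imp id (fun ⟨z, hz⟩ => ⟨(z : ℝ), AddMonoidHom.mem_range.2 ⟨z, rfl⟩, hz⟩))
      (fun a => (huZ a).imp id (fun ⟨z, hz⟩ => ⟨(z : ℝ), AddMonoidHom.mem_range.2 ⟨z, rfl⟩, hz⟩))
      (fun X => (hρZ X).imp id (fun ⟨z, hz⟩ => ⟨(z : ℝ), AddMonoidHom.mem_range.2 ⟨z, rfl⟩, hz⟩))
    refine ⟨φ, hφ, fun a => ?_⟩
    obtain ⟨z, hz⟩ := AddMonoidHom.mem_range.1 (hS a)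
    exact ⟨z, hz.symm⟩
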